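/- Let a ∈ ℝ ∪ {−∞}, b, d ∈ ℝ ∪ {+∞} and c ∈ ℝ, with a < b and c < d. Then the k-vector space Hom(k_{(a,b)}, k_{[c,d)}) is one-dimensional over k if c < b ≤ d, and is zero otherwise. -/

import Mathlib

open CategoryTheory TopologicalSpace Set Topology

noncomputable section

variable (k : Type) [Field k]

/-- The support of the function `s : V ∩ I → k` is closed in `V`. -/
def SuppClosedIn (I V : Set ℝ) (s : ↥(V ∩ I) → k) : Prop :=
  ∀ x ∈ V, x ∈ closure {y : ℝ | ∃ h : y ∈ V ∩ I, s ⟨y, h⟩ ≠ 0} →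
    ∃ h : x ∈ V ∩ I, s ⟨x, h⟩ ≠ 0

lemma zero_locConst (I V : Set ℝ) :
    IsLocallyConstant (0 : ↥(V ∩ I) → k) ∧ SuppClosedIn k I V 0 := by
  constructor
  · exact IsLocallyConstant.const 0
  · intro x _ hx
    exfalso
    have h0 : {y : ℝ | ∃ h : y ∈ V ∩ I, (0 : ↥(V ∩ I) → k) ⟨y, h⟩ ≠ 0} = ∅ := by
      ext y; simp
    rw [h0, closure_empty] at hx
    exact hx

/-- The sections over `V` of the sheaf `k_I`: locally constant functions on `V ∩ I`
whose support is closed in `V`. -/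
def secSub (I V : Set ℝ) : Submodule k (↥(V ∩ I) → k) where
  carrier := {s | IsLocallyConstant s ∧ SuppClosedIn k I V s}
  zero_mem' := zero_locConst k I V
  add_mem' := by
    rintro s t ⟨hslc, hscl⟩ ⟨htlc, htcl⟩
    have hlc : IsLocallyConstant (s + t) := hslc.comp₂ htlc (· + ·)
    refine ⟨hlc, ?_⟩
    intro x hxV hxcl
    have hsub : {y : ℝ | ∃ h : y ∈ V ∩ I, (s + t) ⟨y, h⟩ ≠ 0}
        ⊆ {y : ℝ | ∃ h : y ∈ V ∩ I, s ⟨y, h⟩ ≠ 0}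
          ∪ {y : ℝ | ∃ h : y ∈ V ∩ I, t ⟨y, h⟩ ≠ 0} := by
      rintro y ⟨h, hy⟩
      by_cases hsy : s ⟨y, h⟩ = 0
      · refine Or.inr ⟨h, fun h0 => hy ?_⟩
        show s ⟨y, h⟩ + t ⟨y, h⟩ = 0
        rw [hsy, h0, add_zero]
      · exact Or.inl ⟨h, hsy⟩
    have hxVI : x ∈ V ∩ I := by
      have hcl2 := closure_mono hsub hxcl
      rw [closure_union] at hcl2
      rcases hcl2 with h | h
      · exact (hscl x hxV h).choose
      · exact (htcl x hxV h).choose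
    refine ⟨hxVI, ?_⟩
    have hA : IsClosed {y : ↥(V ∩ I) | (s + t) y ≠ 0} := by
      have h1 : IsOpen ((s + t) ⁻¹' {0}) := hlc {0}
      have h2 := h1.isClosed_compl
      have h3 : ((s + t) ⁻¹' {0})ᶜ = {y : ↥(V ∩ I) | (s + t) y ≠ 0} := by
        ext y; simp
      exact h3 ▸ h2
    have hmem : (⟨x, hxVI⟩ : ↥(V ∩ I)) ∈ closure {y : ↥(V ∩ I) | (s + t) y ≠ 0} := by
      rw [closure_subtype]
      have himg : Subtype.val '' {y : ↥(V ∩ I) | (s + t) y ≠ 0}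
          = {y : ℝ | ∃ h : y ∈ V ∩ I, (s + t) ⟨y, h⟩ ≠ 0} := by
        ext y
        constructor
        · rintro ⟨z, hz, rfl⟩; exact ⟨z.2, hz⟩
        · rintro ⟨h, hy⟩; exact ⟨⟨y, h⟩, hy, rfl⟩
      rw [himg]
      exact hxcl
    have := hA.closure_eq ▸ hmem
    exact this
  smul_mem' := by
    intro c s hs
    rcases hs with ⟨hlc, hcl⟩
    by_cases hc : c = 0
    · subst hc
      rw [zero_smul]
      exact zero_locConst k I V
    · constructor
      · exact hlc.comp (fun a => c • a)
      · intro x hxV hxcl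
        have hset : {y : ℝ | ∃ h : y ∈ V ∩ I, (c • s) ⟨y, h⟩ ≠ 0}
            = {y : ℝ | ∃ h : y ∈ V ∩ I, s ⟨y, h⟩ ≠ 0} := by
          ext y
          constructor
          · rintro ⟨h, hy⟩
            refine ⟨h, fun h0 => hy ?_⟩
            show c • s ⟨y, h⟩ = 0
            rw [h0, smul_zero]
          · rintro ⟨h, hy⟩
            exact ⟨h, by simpa [smul_eq_zero, hc] using hy⟩
        rw [hset] at hxcl
        obtain ⟨h, hy⟩ := hcl x hxV hxcl
        exact ⟨h, by simpa [smul_eq_zero, hc] using hy⟩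
/-- Restriction of sections. -/
def resFun (I : Set ℝ) {V W : Set ℝ} (h : W ⊆ V) (s : ↥(V ∩ I) → k) : ↥(W ∩ I) → k :=
  fun y => s ⟨y.1, ⟨h y.2.1, y.2.2⟩⟩

lemma resFun_mem (I : Set ℝ) {V W : Set ℝ} (h : W ⊆ V) (s : ↥(V ∩ I) → k)
    (hs : s ∈ secSub k I V) : resFun k I h s ∈ secSub k I W := by
  obtain ⟨hlc, hcl⟩ := hs
  constructor
  · exact hlc.comp_continuous (Continuous.subtype_mk continuous_subtype_val _)
  · intro x hxW hxcl
    have hsub : {y : ℝ | ∃ h' : y ∈ W ∩ I, resFun k I h s ⟨y, h'⟩ ≠ 0}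
        ⊆ {y : ℝ | ∃ h' : y ∈ V ∩ I, s ⟨y, h'⟩ ≠ 0} := by
      rintro y ⟨h', hy⟩
      exact ⟨⟨h h'.1, h'.2⟩, hy⟩
    obtain ⟨hxVI, hne⟩ := hcl x (h hxW) (closure_mono hsub hxcl)
    exact ⟨⟨hxW, hxVI.2⟩, hne⟩

/-- Restriction as a linear map. -/
def resLM (I : Set ℝ) {V W : Set ℝ} (h : W ⊆ V) : secSub k I V →ₗ[k] secSub k I W where
  toFun s := ⟨resFun k I h s.1, resFun_mem k I h s.1 s.2⟩
  map_add' s t := rfl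
  map_smul' c s := rfl

/-- The presheaf `k_I` on `ℝ`. -/
def intervalPresheaf (I : Set ℝ) : TopCat.Presheaf (ModuleCat.{0} k) (TopCat.of ℝ) where
  obj V := ModuleCat.of k (secSub k I V.unop.1)
  map {V W} f := ModuleCat.ofHom (resLM k I (leOfHom f.unop))
  map_id V := rfl
  map_comp f g := rfl
theorem intervalPresheaf_isSheaf (I : Set ℝ) : (intervalPresheaf k I).IsSheaf := by
  classical
  rw [TopCat.Presheaf.isSheaf_iff_isSheafUniqueGluing]
  rintro ι U (sf : ∀ i, ↥(secSub k I (U i).1)) hcomp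
  -- pointwise compatibility
  have key : ∀ (i j : ι) (x : ℝ) (hxi : x ∈ (U i).1 ∩ I) (hxj : x ∈ (U j).1 ∩ I),
      (sf i).1 ⟨x, hxi⟩ = (sf j).1 ⟨x, hxj⟩ := by
    intro i j x hxi hxj
    have h := hcomp i j
    have hmem : x ∈ (U i ⊓ U j).1 ∩ I := ⟨⟨hxi.1, hxj.1⟩, hxi.2⟩
    have h2 := congrFun (congrArg Subtype.val h) ⟨x, hmem⟩
    exact h2
  have hmemS : ∀ x : ↥((iSup U : Opens (TopCat.of ℝ)).1 ∩ I), ∃ i, x.1 ∈ U i := by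
    intro x
    exact Opens.mem_iSup.mp x.2.1
  set idx : ↥((iSup U : Opens (TopCat.of ℝ)).1 ∩ I) → ι := fun x => (hmemS x).choose with hidxdef
  have hidx : ∀ x, x.1 ∈ U (idx x) := fun x => (hmemS x).choose_spec
  set s₀ : ↥((iSup U : Opens (TopCat.of ℝ)).1 ∩ I) → k :=
    fun x => (sf (idx x)).1 ⟨x.1, ⟨hidx x, x.2.2⟩⟩ with hs₀def
  have hs₀ : ∀ (x : ↥((iSup U : Opens (TopCat.of ℝ)).1 ∩ I)) (i : ι) (hx : x.1 ∈ U i),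
      s₀ x = (sf i).1 ⟨x.1, ⟨hx, x.2.2⟩⟩ :=
    fun x i hx => key (idx x) i x.1 ⟨hidx x, x.2.2⟩ ⟨hx, x.2.2⟩
  have hlc : IsLocallyConstant s₀ := by
    rw [IsLocallyConstant.iff_exists_open]
    intro x
    obtain ⟨i, hi⟩ := hmemS x
    have hlci : IsLocallyConstant ((sf i).1 : ↥((U i).1 ∩ I) → k) := (sf i).2.1
    obtain ⟨W, hWopen, hpW, hWconst⟩ := hlci.exists_open (⟨x.1, ⟨hi, x.2.2⟩⟩ : ↥((U i).1 ∩ I))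
    obtain ⟨O, hOopen, hWO⟩ := isOpen_induced_iff.mp hWopen
    subst hWO
    refine ⟨Subtype.val ⁻¹' (O ∩ (U i).1), (hOopen.inter (U i).2).preimage continuous_subtype_val,
      ⟨hpW, hi⟩, ?_⟩
    intro y hy
    have hyi : y.1 ∈ U i := hy.2
    rw [hs₀ y i hyi, hs₀ x i hi]
    exact hWconst ⟨y.1, ⟨hyi, y.2.2⟩⟩ hy.1
  have hscl : SuppClosedIn k I (iSup U : Opens (TopCat.of ℝ)).1 s₀ := by
    intro x hxS hxcl
    obtain ⟨i, hi⟩ := Opens.mem_iSup.mp hxS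
    have h1 : x ∈ closure ({y : ℝ | ∃ h : y ∈ (iSup U : Opens (TopCat.of ℝ)).1 ∩ I, s₀ ⟨y, h⟩ ≠ 0}
        ∩ (U i).1) := by
      rw [mem_closure_iff] at hxcl ⊢
      intro O hO hxO
      obtain ⟨z, hz⟩ := hxcl (O ∩ (U i).1) (hO.inter (U i).2) ⟨hxO, hi⟩
      exact ⟨z, hz.1.1, hz.2, hz.1.2⟩
    have hsub : {y : ℝ | ∃ h : y ∈ (iSup U : Opens (TopCat.of ℝ)).1 ∩ I, s₀ ⟨y, h⟩ ≠ 0}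
        ∩ (U i).1 ⊆ {y : ℝ | ∃ h : y ∈ (U i).1 ∩ I, (sf i).1 ⟨y, h⟩ ≠ 0} := by
      rintro y ⟨⟨hy, hne⟩, hyi⟩
      refine ⟨⟨hyi, hy.2⟩, ?_⟩
      rw [← hs₀ ⟨y, hy⟩ i hyi]
      exact hne
    obtain ⟨hyUI, hne⟩ := (sf i).2.2 x hi (closure_mono hsub h1)
    refine ⟨⟨hxS, hyUI.2⟩, ?_⟩
    rw [hs₀ ⟨x, ⟨hxS, hyUI.2⟩⟩ i hyUI.1]
    exact hne
  refine ⟨⟨s₀, hlc, hscl⟩, ?_, ?_⟩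
  · intro i
    apply Subtype.ext
    funext y
    exact hs₀ ⟨y.1, ⟨leOfHom (Opens.leSupr U i) y.2.1, y.2.2⟩⟩ i y.2.1
  · intro t ht
    apply Subtype.ext
    funext x
    have h := ht (idx x)
    have h2 := congrFun (congrArg Subtype.val h) ⟨x.1, ⟨hidx x, x.2.2⟩⟩
    exact h2

/-- The sheaf `k_I` on `ℝ` for an interval `I`: locally constant functions on `V ∩ I`
whose support is closed in `V`. -/
def intervalSheaf (I : Set ℝ) :
    Sheaf (Opens.grothendieckTopology (TopCat.of ℝ)) (ModuleCat.{0} k) :=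
  ⟨intervalPresheaf k I, intervalPresheaf_isSheaf k I⟩
/-- The category of sheaves of `k`-vector spaces on `ℝ`. -/
abbrev RealSheafCat := Sheaf (Opens.grothendieckTopology (TopCat.of ℝ)) (ModuleCat.{0} k)

instance sheafHomSMul (F G : RealSheafCat k) : SMul k (F ⟶ G) :=
  ⟨fun c f => ⟨c • f.hom⟩⟩

instance sheafHomModule (F G : RealSheafCat k) : Module k (F ⟶ G) :=
  Function.Injective.module k
    { toFun := fun f : F ⟶ G => f.hom
      map_zero' := rfl
      map_add' := fun _ _ => rfl }
    (fun _ _ h => Sheaf.hom_ext h) (fun _ _ => rfl)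

instance : HasExt.{1} (RealSheafCat k) := by
  letI := HasDerivedCategory.standard (RealSheafCat k)
  exact hasExt_of_hasDerivedCategory _

/-- The interval `(a, b)` with possibly infinite endpoints. -/
def Ioo' (a b : EReal) : Set ℝ := {x : ℝ | a < (x : EReal) ∧ (x : EReal) < b}

/-- The interval `[a, b)` with a possibly infinite right endpoint. -/
def Ico' (a : ℝ) (b : EReal) : Set ℝ := {x : ℝ | a ≤ x ∧ (x : EReal) < b}

/-- The interval `(a, b]` with a possibly infinite left endpoint. -/
def Ioc' (a : EReal) (b : ℝ) : Set ℝ := {x : ℝ | a < (x : EReal) ∧ x ≤ b}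

/-- Identification of sheaves on the topological space `ℝ` with objects of `RealSheafCat`. -/
def toRS (F : TopCat.Sheaf (ModuleCat.{0} k) (TopCat.of ℝ)) : RealSheafCat k := F



namespace HomOpenIcoAux

open Opposite

variable {k : Type} [Field k]

lemma one_mem (I : Set ℝ) : (fun _ => (1:k) : ↥(I ∩ I) → k) ∈ secSub k I I := by
  refine ⟨IsLocallyConstant.const 1, ?_⟩
  intro x hx _
  exact ⟨⟨hx, hx⟩, one_ne_zero⟩

/-- the canonical section 1 over I itself -/
def oneSec (k : Type) [Field k] (I : Set ℝ) : secSub k I I := ⟨_, one_mem I⟩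

lemma nat_eval (I J : Set ℝ) (f : intervalSheaf k I ⟶ intervalSheaf k J)
    {V W : Opens (TopCat.of ℝ)} (hWV : W ≤ V) (s : secSub k I V.1)
    (y : ℝ) (hy : y ∈ W.1 ∩ J) :
    ((f.hom.app (op V)) s).1 ⟨y, ⟨hWV hy.1, hy.2⟩⟩
      = ((f.hom.app (op W)) ((resLM k I hWV) s)).1 ⟨y, hy⟩ := by
  have h := f.hom.naturality (homOfLE hWV).op
  have h2 := congrArg (fun (g : (intervalSheaf k I).val.obj (op V) ⟶
      (intervalSheaf k J).val.obj (op W)) => (g s).1 ⟨y, hy⟩) h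
  exact h2.symm


lemma eval_mem (I J : Set ℝ) (hI : IsOpen I)
    (f : intervalSheaf k I ⟶ intervalSheaf k J)
    (V : Opens (TopCat.of ℝ)) (s : secSub k I V.1)
    (x : ℝ) (hx : x ∈ V.1 ∩ J) (h : x ∈ I) :
    ((f.hom.app (op V)) s).1 ⟨x, hx⟩ =
      s.1 ⟨x, ⟨hx.1, h⟩⟩ *
        ((f.hom.app (op (⟨I, hI⟩ : Opens (TopCat.of ℝ)))) (oneSec k I)).1 ⟨x, ⟨h, hx.2⟩⟩ := by
  obtain ⟨U, hUo, hxU, hUc⟩ := s.2.1.exists_open ⟨x, ⟨hx.1, h⟩⟩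
  obtain ⟨O, hOo, rfl⟩ := isOpen_induced_iff.mp hUo
  set W : Opens (TopCat.of ℝ) := ⟨O ∩ (V.1 ∩ I), hOo.inter (V.2.inter hI)⟩ with hWdef
  have hWV : W ≤ V := fun y hy => hy.2.1
  have hWI : W ≤ (⟨I, hI⟩ : Opens (TopCat.of ℝ)) := fun y hy => hy.2.2
  have hxW : x ∈ W.1 := ⟨hxU, hx.1, h⟩
  have hres : (resLM k I hWV) s
      = s.1 ⟨x, ⟨hx.1, h⟩⟩ • (resLM k I hWI) (oneSec k I) := by
    apply Subtype.ext
    funext y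
    have := hUc ⟨y.1, ⟨hWV y.2.1, y.2.2⟩⟩ y.2.1.1
    show s.1 ⟨y.1, ⟨hWV y.2.1, y.2.2⟩⟩ = s.1 ⟨x, ⟨hx.1, h⟩⟩ • (1 : k)
    rw [smul_eq_mul, mul_one]
    exact this
  have h1 := nat_eval I J f hWV s x ⟨hxW, hx.2⟩
  have h2 := nat_eval I J f hWI (oneSec k I) x ⟨hxW, hx.2⟩
  rw [show (⟨x, hx⟩ : ↥(V.1 ∩ J)) = ⟨x, ⟨hWV hxW, hx.2⟩⟩ from rfl]
  rw [h1, hres]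
  erw [map_smul]
  show s.1 ⟨x, ⟨hx.1, h⟩⟩ •
      ((f.hom.app (op W)) ((resLM k I hWI) (oneSec k I))).1 ⟨x, ⟨hxW, hx.2⟩⟩ = _
  rw [← h2, smul_eq_mul]

lemma eval_notmem (I J : Set ℝ)
    (f : intervalSheaf k I ⟶ intervalSheaf k J)
    (V : Opens (TopCat.of ℝ)) (s : secSub k I V.1)
    (x : ℝ) (hx : x ∈ V.1 ∩ J) (h : x ∉ I) :
    ((f.hom.app (op V)) s).1 ⟨x, hx⟩ = 0 := by
  have hxcl : x ∉ closure {y : ℝ | ∃ hy : y ∈ V.1 ∩ I, s.1 ⟨y, hy⟩ ≠ 0} := by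
    intro hc
    exact h (s.2.2 x hx.1 hc).choose.2
  set W : Opens (TopCat.of ℝ) :=
    ⟨V.1 ∩ (closure {y : ℝ | ∃ hy : y ∈ V.1 ∩ I, s.1 ⟨y, hy⟩ ≠ 0})ᶜ,
      V.2.inter isClosed_closure.isOpen_compl⟩ with hWdef
  have hWV : W ≤ V := fun y hy => hy.1
  have hxW : x ∈ W.1 := ⟨hx.1, hxcl⟩
  have hres : (resLM k I hWV) s = 0 := by
    apply Subtype.ext
    funext y
    show s.1 ⟨y.1, ⟨hWV y.2.1, y.2.2⟩⟩ = 0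
    by_contra hne
    exact y.2.1.2 (subset_closure ⟨⟨hWV y.2.1, y.2.2⟩, hne⟩)
  rw [show (⟨x, hx⟩ : ↥(V.1 ∩ J)) = ⟨x, ⟨hWV hxW, hx.2⟩⟩ from rfl]
  rw [nat_eval I J f hWV s x ⟨hxW, hx.2⟩, hres]
  erw [map_zero]
  rfl


lemma isOpen_Ioo' (a b : EReal) : IsOpen (Ioo' a b) := by
  have h : Ioo' a b = Real.toEReal ⁻¹' (Set.Ioo a b) := rfl
  rw [h]
  exact isOpen_Ioo.preimage continuous_coe_real_ereal

lemma ordConn (a b : EReal) (c : ℝ) (d : EReal) :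
    Set.OrdConnected (Ioo' a b ∩ Ico' c d) := by
  constructor
  rintro x ⟨⟨hx1, hx2⟩, hx3, hx4⟩ y ⟨⟨hy1, hy2⟩, hy3, hy4⟩ z ⟨hz1, hz2⟩
  exact ⟨⟨lt_of_lt_of_le hx1 (EReal.coe_le_coe_iff.2 hz1),
      lt_of_le_of_lt (EReal.coe_le_coe_iff.2 hz2) hy2⟩,
    ⟨le_trans hx3 hz1, lt_of_le_of_lt (EReal.coe_le_coe_iff.2 hz2) hy4⟩⟩

/-- If `d < b`, every section of `k_{[c,d)}` over `(a,b)` vanishes. -/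
lemma sec_eval_zero (a b : EReal) (c : ℝ) (d : EReal) (hd : d < b)
    (t : secSub k (Ico' c d) (Ioo' a b)) (x : ↥(Ioo' a b ∩ Ico' c d)) : t.1 x = 0 := by
  by_contra ht
  have hdt : d ≠ ⊤ := (lt_of_lt_of_le hd le_top).ne
  have hdb : d ≠ ⊥ := (lt_of_le_of_lt bot_le x.2.2.2).ne'
  set d' : ℝ := d.toReal with hd'def
  have hd' : (d' : EReal) = d := EReal.coe_toReal hdt hdb
  haveI := Subtype.preconnectedSpace (ordConn a b c d).isPreconnected
  have hconst : ∀ y : ↥(Ioo' a b ∩ Ico' c d), t.1 y = t.1 x := fun y =>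
    t.2.1.apply_eq_of_isPreconnected isPreconnected_univ (mem_univ y) (mem_univ x)
  have hxd : x.1 < d' := by
    rw [← EReal.coe_lt_coe_iff, hd']
    exact x.2.2.2
  have hsub : Ico x.1 d' ⊆ {y : ℝ | ∃ hy : y ∈ Ioo' a b ∩ Ico' c d, t.1 ⟨y, hy⟩ ≠ 0} := by
    rintro y ⟨hy1, hy2⟩
    have hyd : (y : EReal) < d := by rw [← hd']; exact_mod_cast hy2
    have hymem : y ∈ Ioo' a b ∩ Ico' c d :=
      ⟨⟨lt_of_lt_of_le x.2.1.1 (EReal.coe_le_coe_iff.2 hy1), lt_trans hyd hd⟩,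
        ⟨le_trans x.2.2.1 hy1, hyd⟩⟩
    refine ⟨hymem, ?_⟩
    rw [hconst ⟨y, hymem⟩]
    exact ht
  have hd'mem : d' ∈ Ioo' a b := by
    constructor
    · rw [hd']; exact lt_trans x.2.1.1 x.2.2.2
    · rw [hd']; exact hd
  have hd'cl : d' ∈ closure {y : ℝ | ∃ hy : y ∈ Ioo' a b ∩ Ico' c d, t.1 ⟨y, hy⟩ ≠ 0} := by
    apply closure_mono hsub
    rw [closure_Ico hxd.ne]
    exact ⟨le_of_lt hxd, le_refl d'⟩
  obtain ⟨hmem, -⟩ := t.2.2 d' hd'mem hd'cl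
  have : (d' : EReal) < d := hmem.2.2
  rw [hd'] at this
  exact lt_irrefl d this


open Classical in
/-- The candidate morphism, pointwise. -/
def Ffun (a b : EReal) (c : ℝ) (d : EReal) (V : Set ℝ) (s : ↥(V ∩ Ioo' a b) → k) :
    ↥(V ∩ Ico' c d) → k :=
  fun y => if h : y.1 ∈ Ioo' a b then s ⟨y.1, ⟨y.2.1, h⟩⟩ else 0

lemma Ffun_mem (a b : EReal) (c : ℝ) (d : EReal) (hbd : b ≤ d)
    (V : Opens (TopCat.of ℝ)) (s : secSub k (Ioo' a b) V.1) :
    Ffun a b c d V.1 s.1 ∈ secSub k (Ico' c d) V.1 := by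
  constructor
  · -- locally constant
    rw [IsLocallyConstant.iff_exists_open]
    intro x
    by_cases hcl : x.1 ∈ closure {y : ℝ | ∃ hy : y ∈ V.1 ∩ Ioo' a b, s.1 ⟨y, hy⟩ ≠ 0}
    · obtain ⟨hxVI, hsx⟩ := s.2.2 x.1 x.2.1 hcl
      obtain ⟨U, hUo, hxU, hUc⟩ := s.2.1.exists_open ⟨x.1, hxVI⟩
      obtain ⟨O, hOo, rfl⟩ := isOpen_induced_iff.mp hUo
      refine ⟨Subtype.val ⁻¹' (O ∩ (V.1 ∩ Ioo' a b)),
        ((hOo.inter (V.2.inter (isOpen_Ioo' a b))).preimage continuous_subtype_val),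
        ⟨hxU, hxVI⟩, ?_⟩
      intro y hy
      have hyI : y.1 ∈ Ioo' a b := hy.2.2
      have h1 : Ffun (k := k) a b c d V.1 s.1 y = s.1 ⟨y.1, ⟨y.2.1, hyI⟩⟩ := dif_pos hyI
      have h2 : Ffun (k := k) a b c d V.1 s.1 x = s.1 ⟨x.1, hxVI⟩ := dif_pos hxVI.2
      rw [h1, h2]
      exact hUc ⟨y.1, ⟨y.2.1, hyI⟩⟩ hy.1
    · refine ⟨Subtype.val ⁻¹'
        (closure {y : ℝ | ∃ hy : y ∈ V.1 ∩ Ioo' a b, s.1 ⟨y, hy⟩ ≠ 0})ᶜ,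
        (isClosed_closure.isOpen_compl).preimage continuous_subtype_val, hcl, ?_⟩
      have hzero : ∀ z : ↥(V.1 ∩ Ico' c d), z.1 ∉ closure
          {y : ℝ | ∃ hy : y ∈ V.1 ∩ Ioo' a b, s.1 ⟨y, hy⟩ ≠ 0} →
          Ffun (k := k) a b c d V.1 s.1 z = 0 := by
        intro z hz
        by_cases hzI : z.1 ∈ Ioo' a b
        · rw [show Ffun (k := k) a b c d V.1 s.1 z = s.1 ⟨z.1, ⟨z.2.1, hzI⟩⟩ from dif_pos hzI]
          by_contra hne
          exact hz (subset_closure ⟨⟨z.2.1, hzI⟩, hne⟩)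
        · exact dif_neg hzI
      intro y hy
      rw [hzero y hy, hzero x hcl]
  · -- support closed
    intro x hxV hxcl
    have hsub1 : {y : ℝ | ∃ hy : y ∈ V.1 ∩ Ico' c d, Ffun (k := k) a b c d V.1 s.1 ⟨y, hy⟩ ≠ 0}
        ⊆ {y : ℝ | ∃ hy : y ∈ V.1 ∩ Ioo' a b, s.1 ⟨y, hy⟩ ≠ 0} := by
      rintro y ⟨hy, hne⟩
      by_cases hyI : y ∈ Ioo' a b
      · rw [show Ffun (k := k) a b c d V.1 s.1 ⟨y, hy⟩ = s.1 ⟨y, ⟨hy.1, hyI⟩⟩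
          from dif_pos hyI] at hne
        exact ⟨⟨hy.1, hyI⟩, hne⟩
      · exact absurd (dif_neg hyI) hne
    have hsub2 : {y : ℝ | ∃ hy : y ∈ V.1 ∩ Ico' c d, Ffun (k := k) a b c d V.1 s.1 ⟨y, hy⟩ ≠ 0}
        ⊆ Ici c := fun y hy => hy.choose.2.1
    obtain ⟨hxVI, hsx⟩ := s.2.2 x hxV (closure_mono hsub1 hxcl)
    have hcx : c ≤ x := by
      have := closure_mono hsub2 hxcl
      rwa [isClosed_Ici.closure_eq] at this
    have hxJ : x ∈ Ico' c d := ⟨hcx, lt_of_lt_of_le hxVI.2.2 hbd⟩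
    refine ⟨⟨hxV, hxJ⟩, ?_⟩
    rw [show Ffun (k := k) a b c d V.1 s.1 ⟨x, ⟨hxV, hxJ⟩⟩ = s.1 ⟨x, ⟨hxV, hxVI.2⟩⟩
      from dif_pos hxVI.2]
    exact hsx

/-- The canonical nonzero morphism when `b ≤ d`. -/
def Fhom (a b : EReal) (c : ℝ) (d : EReal) (hbd : b ≤ d) :
    intervalSheaf k (Ioo' a b) ⟶ intervalSheaf k (Ico' c d) :=
  ⟨{ app := fun V => ModuleCat.ofHom
      { toFun := fun s => ⟨Ffun a b c d V.unop.1 s.1, Ffun_mem a b c d hbd V.unop s⟩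
        map_add' := by
          intro s t
          apply Subtype.ext
          funext y
          show Ffun a b c d _ (s.1 + t.1) y
            = Ffun (k := k) a b c d _ s.1 y + Ffun (k := k) a b c d _ t.1 y
          simp only [Ffun]
          by_cases h : y.1 ∈ Ioo' a b
          · rw [dif_pos h, dif_pos h, dif_pos h]
            rfl
          · rw [dif_neg h, dif_neg h, dif_neg h, add_zero]
        map_smul' := by
          intro m s
          apply Subtype.ext
          funext y
          show Ffun a b c d _ (m • s.1) y = m • Ffun (k := k) a b c d _ s.1 y
          simp only [Ffun]
          by_cases h : y.1 ∈ Ioo' a b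
          · rw [dif_pos h, dif_pos h]
            rfl
          · rw [dif_neg h, dif_neg h, smul_zero] }
     naturality := by
       intro X Y g
       apply ModuleCat.hom_ext
       apply LinearMap.ext
       intro s
       apply Subtype.ext
       funext y
       show Ffun a b c d (unop Y).1 (resFun k (Ioo' a b) (leOfHom g.unop) s.1) y
         = Ffun (k := k) a b c d (unop X).1 s.1 ⟨y.1, ⟨leOfHom g.unop y.2.1, y.2.2⟩⟩
       simp only [Ffun, resFun] }⟩

end HomOpenIcoAux
open Opposite
/-- For `a ∈ ℝ ∪ {−∞}`, `b, d ∈ ℝ ∪ {+∞}`, `c ∈ ℝ`, with `a < b` and `c < d`,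
the space `Hom(k_{(a,b)}, k_{[c,d)})` is one-dimensional over `k` if `c < b ≤ d`,
and is zero otherwise. -/
theorem hom_open_ico (k : Type) [Field k] (a b : EReal) (hab : a < b)
    (c : ℝ) (d : EReal) (hcd : (c : EReal) < d) :
    (((c : EReal) < b ∧ b ≤ d) →
      Module.rank k (intervalSheaf k (Ioo' a b) ⟶ intervalSheaf k (Ico' c d)) = 1) ∧
    (¬ ((c : EReal) < b ∧ b ≤ d) →
      ∀ f : intervalSheaf k (Ioo' a b) ⟶ intervalSheaf k (Ico' c d), f = 0) := by
  have hI : IsOpen (Ioo' a b) := HomOpenIcoAux.isOpen_Ioo' a b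
  constructor
  · rintro ⟨hc, hbd⟩
    obtain ⟨x₀, hx₀m, hx₀b⟩ := EReal.exists_between_coe_real (max_lt hab hc)
    have hx₀I : x₀ ∈ Ioo' a b := ⟨lt_of_le_of_lt (le_max_left _ _) hx₀m, hx₀b⟩
    have hx₀c : (c : EReal) < (x₀ : EReal) := lt_of_le_of_lt (le_max_right _ _) hx₀m
    have hx₀J : x₀ ∈ Ico' c d :=
      ⟨le_of_lt (EReal.coe_lt_coe_iff.mp hx₀c), lt_of_lt_of_le hx₀b hbd⟩
    set V₀ : Opens (TopCat.of ℝ) := ⟨Ioo' a b, hI⟩ with hV₀def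
    set φ : (intervalSheaf k (Ioo' a b) ⟶ intervalSheaf k (Ico' c d)) →ₗ[k] k :=
      { toFun := fun f =>
          ((f.hom.app (op V₀)) (HomOpenIcoAux.oneSec k (Ioo' a b))).1 ⟨x₀, ⟨hx₀I, hx₀J⟩⟩
        map_add' := fun f g => rfl
        map_smul' := fun m f => rfl } with hφdef
    haveI := Subtype.preconnectedSpace (HomOpenIcoAux.ordConn a b c d).isPreconnected
    have hconst : ∀ (f : intervalSheaf k (Ioo' a b) ⟶ intervalSheaf k (Ico' c d))
        (y : ↥(Ioo' a b ∩ Ico' c d)),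
        ((f.hom.app (op V₀)) (HomOpenIcoAux.oneSec k (Ioo' a b))).1 y = φ f :=
      fun f y =>
        ((f.hom.app (op V₀)) (HomOpenIcoAux.oneSec k (Ioo' a b))).2.1.apply_eq_of_isPreconnected
          isPreconnected_univ (mem_univ y) (mem_univ (⟨x₀, ⟨hx₀I, hx₀J⟩⟩ : ↥(Ioo' a b ∩ Ico' c d)))
    have hker : ∀ f, φ f = 0 → f = 0 := by
      intro f hf
      apply Sheaf.hom_ext
      apply NatTrans.ext
      funext V
      apply ModuleCat.hom_ext
      apply LinearMap.ext
      intro s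
      apply Subtype.ext
      funext x
      show ((f.hom.app (op V.unop)) s).1 ⟨x.1, x.2⟩ = 0
      by_cases h : x.1 ∈ Ioo' a b
      · rw [HomOpenIcoAux.eval_mem (Ioo' a b) (Ico' c d) hI f V.unop s x.1 x.2 h]
        have h0 : ((f.hom.app (op V₀)) (HomOpenIcoAux.oneSec k (Ioo' a b))).1
            ⟨x.1, ⟨h, x.2.2⟩⟩ = 0 := (hconst f ⟨x.1, ⟨h, x.2.2⟩⟩).trans hf
        exact mul_eq_zero_of_right _ h0
      · exact HomOpenIcoAux.eval_notmem (Ioo' a b) (Ico' c d) f V.unop s x.1 x.2 h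
    have hφF : φ (HomOpenIcoAux.Fhom a b c d hbd) = 1 := by
      show HomOpenIcoAux.Ffun a b c d (Ioo' a b)
        (HomOpenIcoAux.oneSec k (Ioo' a b)).1 ⟨x₀, ⟨hx₀I, hx₀J⟩⟩ = 1
      simp only [HomOpenIcoAux.Ffun]
      rw [dif_pos hx₀I]
      rfl
    have hsurj : Function.Surjective φ := by
      intro μ
      refine ⟨μ • HomOpenIcoAux.Fhom a b c d hbd, ?_⟩
      rw [map_smul, hφF, smul_eq_mul, mul_one]
    have e : (intervalSheaf k (Ioo' a b) ⟶ intervalSheaf k (Ico' c d)) ≃ₗ[k] k :=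
      LinearEquiv.ofBijective φ ⟨(injective_iff_map_eq_zero φ).mpr hker, hsurj⟩
    rw [e.rank_eq, Module.rank_self]
  · intro hn f
    apply Sheaf.hom_ext
    apply NatTrans.ext
    funext V
    apply ModuleCat.hom_ext
    apply LinearMap.ext
    intro s
    apply Subtype.ext
    funext x
    show ((f.hom.app (op V.unop)) s).1 ⟨x.1, x.2⟩ = 0
    by_cases h : x.1 ∈ Ioo' a b
    · rw [HomOpenIcoAux.eval_mem (Ioo' a b) (Ico' c d) hI f V.unop s x.1 x.2 h]
      by_cases h1 : (c : EReal) < b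
      · have hdb : d < b := not_le.mp (fun hle => hn ⟨h1, hle⟩)
        exact mul_eq_zero_of_right _
          (HomOpenIcoAux.sec_eval_zero a b c d hdb _ ⟨x.1, ⟨h, x.2.2⟩⟩)
      · exact absurd (lt_of_le_of_lt (EReal.coe_le_coe_iff.2 x.2.2.1) h.2) h1
    · exact HomOpenIcoAux.eval_notmem (Ioo' a b) (Ico' c d) f V.unop s x.1 x.2 h

end
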